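/- arXiv:1609.04029 — 3 statements merged into one kernel-verified Lean document; each statement's English description precedes it below -/
import Mathlib

section
/- In a rooted forest in which every vertex has at most two children, if v is an X-bifurcate vertex (both children of v have descendants in X), then v has exactly two X-children, where an X-child of v is a descendant u of v such that every edge branching off the path from v to u leads to an X-exclusive subtree and u is either in X or X-bifurcate. -/
/-- A rooted forest: each vertex has an optional parent, with no infinite
ancestor chains. -/
structure RForest (V : Type) where
  parent : V → Option V
  wf : WellFounded fun a b : V => parent b = some a

namespace RForest

variable {V : Type}

/-- `a` is a (weak) ancestor of `x`, i.e. `x` is a descendant of `a`. -/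
def Anc (F : RForest V) (x a : V) : Prop :=
  Relation.ReflTransGen (fun c p => F.parent c = some p) x a

/-- the set of children of `v`. -/
def children (F : RForest V) (v : V) : Set V := {c | F.parent c = some v}

/-- `v` is a leaf. -/
def IsLeaf (F : RForest V) (v : V) : Prop := F.children v = ∅

/-- `v` is `X`-inclusive: it has a descendant in `X`. -/
def XIncl (F : RForest V) (X : Set V) (v : V) : Prop := ∃ x ∈ X, F.Anc x v

/-- `v` is `X`-bifurcate: a non-leaf both of whose children are `X`-inclusive. -/
def XBif (F : RForest V) (X : Set V) (v : V) : Prop :=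
  ∃ c₁ c₂, c₁ ≠ c₂ ∧ F.parent c₁ = some v ∧ F.parent c₂ = some v ∧
    F.XIncl X c₁ ∧ F.XIncl X c₂

/-- `u` is an `X`-child of `v`: a proper descendant `u` of `v` such that every
edge `(p,c)` branching off the path from `v` down to `u` (at an inner vertex
`p`) has an `X`-exclusive head `c`, and `u ∈ X` or `u` is `X`-bifurcate. -/
def XChild (F : RForest V) (X : Set V) (v u : V) : Prop :=
  F.Anc u v ∧ u ≠ v ∧
    (∀ p c, F.parent c = some p → F.Anc u p → F.Anc p v → p ≠ u → p ≠ v →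
      ¬ F.Anc u c → ¬ F.XIncl X c) ∧
    (u ∈ X ∨ F.XBif X u)

end RForest

namespace RForest

variable {V : Type} {F : RForest V} {X : Set V}

lemma anc_trans {a b c : V} (h1 : F.Anc a b) (h2 : F.Anc b c) : F.Anc a c :=
  Relation.ReflTransGen.trans h1 h2

lemma anc_antisymm {a b : V} (h1 : F.Anc a b) (h2 : F.Anc b a) : a = b := by
  by_contra hne
  rcases (Relation.reflTransGen_iff_eq_or_transGen.mp h1) with h | h
  · exact hne h.symm
  · exact (F.wf.transGen.isIrrefl).irrefl a (Relation.transGen_swap.mp (h.trans_left h2))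

/-- Ancestors of a vertex form a chain. -/
lemma anc_chain {u a b : V} (h1 : F.Anc u a) (h2 : F.Anc u b) :
    F.Anc a b ∨ F.Anc b a := by
  induction h1 with
  | refl => exact Or.inl h2
  | tail hum hma ih =>
      rcases ih with h | h
      · rcases Relation.ReflTransGen.cases_head h with rfl | ⟨m', hmm', hm'b⟩
        · exact Or.inr (Relation.ReflTransGen.single hma)
        · rw [hma] at hmm'
          exact Or.inl (by injection hmm' with e; exact e ▸ hm'b)
      · exact Or.inr (h.tail hma)

lemma parent_ne {c w : V} (h : F.parent c = some w) : c ≠ w := by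
  rintro rfl
  exact (F.wf.transGen.isIrrefl).irrefl c (Relation.TransGen.single h)

lemma anc_of_parent {c w : V} (h : F.parent c = some w) : F.Anc c w :=
  Relation.ReflTransGen.single h

/-- a nontrivial descendant descends through some child. -/
lemma exists_child {u w : V} (h : F.Anc u w) (hne : u ≠ w) :
    ∃ c, F.parent c = some w ∧ F.Anc u c := by
  rcases Relation.ReflTransGen.cases_tail h with h' | ⟨c, hc, hcw⟩
  · exact absurd h'.symm hne
  · exact ⟨c, hcw, hc⟩

lemma child_unique {c c' w u : V} (hc : F.parent c = some w) (hc' : F.parent c' = some w)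
    (h : F.Anc u c) (h' : F.Anc u c') : c = c' := by
  have key : ∀ d d' : V, F.parent d = some w → F.parent d' = some w → F.Anc d d' → d = d' := by
    intro d d' hd hd' hdd'
    rcases Relation.ReflTransGen.cases_head hdd' with rfl | ⟨m, hm, hmd'⟩
    · rfl
    · rw [hd] at hm; injection hm with e; subst e
      exact absurd (anc_antisymm hmd' (anc_of_parent hd')) (parent_ne hd').symm
  rcases anc_chain h h' with h2 | h2
  · exact key _ _ hc hc' h2
  · exact (key _ _ hc' hc h2).symm

lemma desc_of_leaf {x w : V} (hw : F.IsLeaf w) (h : F.Anc x w) : x = w := by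
  rcases Relation.ReflTransGen.cases_tail h with h' | ⟨c, _, hcw⟩
  · exact h'.symm
  · exact absurd (Set.eq_empty_iff_forall_notMem.mp hw c) (by simp [children, hcw])

lemma xincl_of_xbif {u : V} (h : F.XBif X u) : F.XIncl X u := by
  obtain ⟨c₁, _, _, hc₁, _, ⟨x, hx, hxc⟩, _⟩ := h
  exact ⟨x, hx, anc_trans hxc (anc_of_parent hc₁)⟩

lemma xincl_mono {c w : V} (h : F.XIncl X c) (hcw : F.Anc c w) : F.XIncl X w := by
  obtain ⟨x, hx, hxc⟩ := h
  exact ⟨x, hx, anc_trans hxc hcw⟩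

/-- descending child well-foundedness from finiteness. -/
lemma child_wf (F : RForest V) [Fintype V] :
    WellFounded fun a b : V => F.parent a = some b := by
  have hirr : IsIrrefl V (Relation.TransGen fun a b : V => F.parent a = some b) := by
    constructor
    intro a ha
    have : Relation.TransGen (fun a b : V => F.parent b = some a) a a := by
      exact (Relation.transGen_swap).mp ha
    exact (F.wf.transGen.isIrrefl).irrefl a this
  have := Finite.wellFounded_of_trans_of_irrefl
    (Relation.TransGen fun a b : V => F.parent a = some b)
  exact @Subrelation.wf V (Relation.TransGen fun a b : V => F.parent a = some b)
    (fun a b : V => F.parent a = some b) (fun h => Relation.TransGen.single h) this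

/-- the spine predicate. -/
def Spine (F : RForest V) (X : Set V) (w u : V) : Prop :=
  F.Anc u w ∧
    (∀ p c, F.parent c = some p → F.Anc u p → F.Anc p w → p ≠ u →
      ¬ F.Anc u c → ¬ F.XIncl X c) ∧
    (u ∈ X ∨ F.XBif X u)

lemma spine_self {w : V} (h : w ∈ X ∨ F.XBif X w) : F.Spine X w w := by
  refine ⟨Relation.ReflTransGen.refl, ?_, h⟩
  intro p c _ hwp hpw hpu _
  exact absurd (anc_antisymm hpw hwp) hpu

lemma spine_exists_unique [Fintype V] (hX : ∀ x ∈ X, F.IsLeaf x) :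
    ∀ w : V, F.XIncl X w → ∃! u, F.Spine X w u := by
  intro w
  induction w using (child_wf F).induction with
  | _ w ih =>
  intro hw
  by_cases hwX : w ∈ X
  · refine ⟨w, spine_self (Or.inl hwX), ?_⟩
    intro u hu
    exact desc_of_leaf (hX w hwX) hu.1
  by_cases hwB : F.XBif X w
  · refine ⟨w, spine_self (Or.inr hwB), ?_⟩
    intro u hu
    by_contra hne
    obtain ⟨c, hcw, huc⟩ := exists_child hu.1 hne
    obtain ⟨c₁, c₂, h12, hc₁, hc₂, hi₁, hi₂⟩ := hwB
    -- pick an X-inclusive child ≠ c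
    have : ∃ c', F.parent c' = some w ∧ F.XIncl X c' ∧ c' ≠ c := by
      by_cases h1 : c₁ = c
      · exact ⟨c₂, hc₂, hi₂, by rw [← h1]; exact h12.symm⟩
      · exact ⟨c₁, hc₁, hi₁, h1⟩
    obtain ⟨c', hc', hi', hne'⟩ := this
    have hnanc : ¬ F.Anc u c' := fun h => hne' (child_unique hc' hcw h huc)
    exact hu.2.1 w c' hc' hu.1 Relation.ReflTransGen.refl (Ne.symm hne) hnanc hi'
  · -- w not in X, not bifurcate: unique inclusive child c
    obtain ⟨x, hx, hxw⟩ := hw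
    have hxne : x ≠ w := fun h => hwX (h ▸ hx)
    obtain ⟨c, hcw, hxc⟩ := exists_child hxw hxne
    have hci : F.XIncl X c := ⟨x, hx, hxc⟩
    -- every other child is X-exclusive
    have hexcl : ∀ c', F.parent c' = some w → c' ≠ c → ¬ F.XIncl X c' := by
      intro c' hc' hne hic'
      exact hwB ⟨c', c, hne, hc', hcw, hic', hci⟩
    obtain ⟨u, hu, huniq⟩ := ih c hcw hci
    refine ⟨u, ?_, ?_⟩
    · -- Spine w u
      obtain ⟨huc, hpath, hfin⟩ := hu
      refine ⟨anc_trans huc (anc_of_parent hcw), ?_, hfin⟩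
      intro p c'' hc'' hup hpw hpu hnanc
      by_cases hpW : p = w
      · subst hpW
        have hne'' : c'' ≠ c := fun h => hnanc (h ▸ huc)
        exact hexcl c'' hc'' hne''
      · -- p is on the path below c: Anc p c
        have hpc : F.Anc p c := by
          rcases anc_chain hup huc with h | h
          · exact h
          · -- Anc c p, p ≠ c would force p = w
            rcases Relation.ReflTransGen.cases_head h with rfl | ⟨m, hm, hmp⟩
            · exact Relation.ReflTransGen.refl
            · rw [hcw] at hm; injection hm with e; subst e
              exact absurd (anc_antisymm hmp hpw).symm hpW
        exact hpath p c'' hc'' hup hpc hpu hnanc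
    · -- uniqueness
      intro u' hu'
      obtain ⟨hu'w, hpath', hfin'⟩ := hu'
      have hu'ne : u' ≠ w := by
        rintro rfl
        rcases hfin' with h | h
        exacts [hwX h, hwB h]
      obtain ⟨c₀, hc₀, hu'c₀⟩ := exists_child hu'w hu'ne
      have hc₀c : c₀ = c := by
        by_contra hne
        refine hexcl c₀ hc₀ hne ?_
        refine xincl_mono ?_ hu'c₀
        rcases hfin' with h | h
        exacts [⟨u', h, Relation.ReflTransGen.refl⟩, xincl_of_xbif h]
      subst hc₀c
      refine huniq u' ⟨hu'c₀, ?_, hfin'⟩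
      intro p c'' hc'' hup hpc hpu hnanc
      exact hpath' p c'' hc'' hup (anc_trans hpc (anc_of_parent hcw)) hpu hnanc

lemma xchild_iff [Fintype V] {v u : V} :
    F.XChild X v u ↔ ∃ c, F.parent c = some v ∧ F.Spine X c u := by
  constructor
  · rintro ⟨huv, hne, hpath, hfin⟩
    obtain ⟨c, hcv, huc⟩ := exists_child huv hne
    refine ⟨c, hcv, huc, ?_, hfin⟩
    intro p c'' hc'' hup hpc hpu hnanc
    have hpv : F.Anc p v := anc_trans hpc (anc_of_parent hcv)
    have hpne : p ≠ v := by
      rintro rfl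
      exact parent_ne hcv (anc_antisymm (anc_of_parent hcv) hpc)
    exact hpath p c'' hc'' hup hpv hpu hpne hnanc
  · rintro ⟨c, hcv, huc, hpath, hfin⟩
    have hcv' := anc_of_parent hcv
    refine ⟨anc_trans huc hcv', ?_, ?_, hfin⟩
    · rintro rfl
      exact parent_ne hcv (anc_antisymm hcv' huc)
    · intro p c'' hc'' hup hpv hpu hpne hnanc
      have hpc : F.Anc p c := by
        obtain ⟨c₀, hc₀v, hpc₀⟩ := exists_child hpv hpne
        have : c₀ = c := child_unique (u := u) hc₀v hcv (anc_trans hup hpc₀) huc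
        exact this ▸ hpc₀
      exact hpath p c'' hc'' hup hpc hpu hnanc

end RForest

/-- In a rooted forest in which every vertex has at most two children, every
`X`-bifurcate vertex has exactly two `X`-children (`X` a set of leaves). -/
theorem stmt_1 {V : Type} [Fintype V] (F : RForest V)
    (hbin : ∀ v : V, (F.children v).ncard ≤ 2)
    (X : Set V) (hX : ∀ x ∈ X, F.IsLeaf x)
    (v : V) (hv : F.XBif X v) :
    ({u | F.XChild X v u}).ncard = 2 := by
  classical
  obtain ⟨c₁, c₂, h12, hc₁, hc₂, hi₁, hi₂⟩ := hv
  obtain ⟨u₁, hu₁, huniq₁⟩ := RForest.spine_exists_unique (F := F) hX c₁ hi₁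
  obtain ⟨u₂, hu₂, huniq₂⟩ := RForest.spine_exists_unique (F := F) hX c₂ hi₂
  have hchildren : ∀ c, F.parent c = some v → c = c₁ ∨ c = c₂ := by
    intro c hc
    by_contra h
    push_neg at h
    have hsub : ({c₁, c₂, c} : Set V) ⊆ F.children v := by
      rintro x (rfl | rfl | rfl) <;> assumption
    have h3 : ({c₁, c₂, c} : Set V).ncard = 3 := by
      rw [Set.ncard_insert_of_notMem (by simp [h12, Ne.symm h.1]),
        Set.ncard_insert_of_notMem (by simp [Ne.symm h.2]), Set.ncard_singleton]
    have hle := Set.ncard_le_ncard hsub (Set.toFinite _)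
    have h2 := hbin v
    omega
  have hset : {u | F.XChild X v u} = {u₁, u₂} := by
    ext u
    simp only [Set.mem_setOf_eq, Set.mem_insert_iff, Set.mem_singleton_iff]
    rw [RForest.xchild_iff]
    constructor
    · rintro ⟨c, hcv, hs⟩
      rcases hchildren c hcv with rfl | rfl
      · exact Or.inl (huniq₁ u hs)
      · exact Or.inr (huniq₂ u hs)
    · rintro (rfl | rfl)
      exacts [⟨c₁, hc₁, hu₁⟩, ⟨c₂, hc₂, hu₂⟩]
  rw [hset]
  have hne : u₁ ≠ u₂ := by
    rintro rfl
    exact h12 (RForest.child_unique hc₁ hc₂ hu₁.1 hu₂.1)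
  exact Set.ncard_pair hne
end

section
/- Suppose T has two pairs (x₁,x₂) and (x₃,x₄) of sibling leaves such that x₁ and x₃ are siblings in F and x₂ and x₄ are siblings in F. Then along every root-leaf path of the search tree that first picks the cherry ({x₁},{x₂}) and then ({x₃},{x₄}), at least 2 of the edges e_F(x₁), e_F(x₂), e_F(x₃), e_F(x₄) are cut; hence the normal key ({x₁,x₂,x₃,x₄}, {e_F(x₁),…,e_F(x₄)}) has size 4 ≤ 2·b, i.e., lower bound b ≥ 2. -/
namespace RForest

variable {V : Type}

/-- `p` lies on the path between `u₁` and `u₂` in `F` (via their lowest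
common ancestor). -/
def OnPath (F : RForest V) (u₁ u₂ p : V) : Prop :=
  ∃ l, F.Anc u₁ l ∧ F.Anc u₂ l ∧
    (∀ l', F.Anc u₁ l' → F.Anc u₂ l' → F.Anc l l') ∧
    ((F.Anc u₁ p ∧ F.Anc p l) ∨ (F.Anc u₂ p ∧ F.Anc p l))

/-- `D_F(u₁,u₂)`: heads of the edges whose tail is an inner vertex of the
path `u₁ ∼_F u₂` and whose head does not appear on the path. -/
def BranchSet (F : RForest V) (u₁ u₂ : V) : Set V :=
  {c | ∃ p, F.parent c = some p ∧ F.OnPath u₁ u₂ p ∧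
    p ≠ u₁ ∧ p ≠ u₂ ∧ ¬ F.OnPath u₁ u₂ c}

lemma anc_det (F : RForest V) {x a y : V} (h : F.Anc x a) (hxa : x ≠ a)
    (hy : F.parent x = some y) : F.Anc y a := by
  rcases Relation.ReflTransGen.cases_head h with rfl | ⟨z, hz, h'⟩
  · exact absurd rfl hxa
  · rw [hy] at hz; cases hz; exact h'

lemma anc_leaf (F : RForest V) {x u : V} (hx : ∀ c, F.parent c ≠ some x)
    (h : F.Anc u x) : u = x := by
  rcases (Relation.ReflTransGen.cases_tail h) with h' | ⟨b, hb, hbx⟩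
  · exact h'.symm
  · exact absurd hbx (hx b)

lemma exists_lca (F : RForest V) {x₂ x₁ l : V} (h1 : F.Anc x₁ l) (h2 : F.Anc x₂ l) :
    ∃ m, F.Anc x₁ m ∧ F.Anc x₂ m ∧
      ∀ l', F.Anc x₁ l' → F.Anc x₂ l' → F.Anc m l' := by
  induction h1 using Relation.ReflTransGen.head_induction_on with
  | refl => exact ⟨l, Relation.ReflTransGen.refl, h2, fun l' h _ => h⟩
  | head h' hcb ih =>
    rename_i a c
    by_cases hca : F.Anc x₂ a
    · exact ⟨a, Relation.ReflTransGen.refl, hca, fun l' h _ => h⟩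
    · obtain ⟨m, hm1, hm2, hmin⟩ := ih
      refine ⟨m, Relation.ReflTransGen.head h' hm1, hm2, fun l' hal' h2l' => ?_⟩
      have hne : a ≠ l' := by rintro rfl; exact hca h2l'
      exact hmin l' (F.anc_det hal' hne h') h2l'

lemma onPath_symm (F : RForest V) {u₁ u₂ p : V} (h : F.OnPath u₁ u₂ p) :
    F.OnPath u₂ u₁ p := by
  obtain ⟨l, a, b, min, h⟩ := h
  exact ⟨l, b, a, fun l' h1 h2 => min l' h2 h1, h.symm⟩

lemma branchSet_symm (F : RForest V) {u₁ u₂ x : V} (h : x ∈ F.BranchSet u₁ u₂) :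
    x ∈ F.BranchSet u₂ u₁ := by
  obtain ⟨p, hp, hpath, hne1, hne2, hnp⟩ := h
  exact ⟨p, hp, F.onPath_symm hpath, hne2, hne1, fun h => hnp (F.onPath_symm h)⟩

lemma mem_branchSet (F : RForest V) {x₁ x₂ x p : V}
    (hl1 : ∀ c, F.parent c ≠ some x₁) (hl2 : ∀ c, F.parent c ≠ some x₂)
    (hlx : ∀ c, F.parent c ≠ some x)
    (h12 : x₁ ≠ x₂) (hx1 : x ≠ x₁) (hx2 : x ≠ x₂)
    (hp1 : F.parent x₁ = some p) (hpx : F.parent x = some p)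
    (hcom : ∃ l, F.Anc x₁ l ∧ F.Anc x₂ l) :
    x ∈ F.BranchSet x₁ x₂ := by
  obtain ⟨l, h1l, h2l⟩ := hcom
  obtain ⟨m, hm1, hm2, hmin⟩ := F.exists_lca h1l h2l
  have hne1 : p ≠ x₁ := fun h => hl1 x₁ (h ▸ hp1)
  have hne2 : p ≠ x₂ := fun h => hl2 x₁ (h ▸ hp1)
  have hx1m : x₁ ≠ m := by
    rintro rfl
    exact h12 (F.anc_leaf hl1 hm2).symm
  have hpm : F.Anc p m := F.anc_det hm1 hx1m hp1
  have honp : F.OnPath x₁ x₂ p :=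
    ⟨m, hm1, hm2, hmin, Or.inl ⟨Relation.ReflTransGen.single hp1, hpm⟩⟩
  refine ⟨p, hpx, honp, hne1, hne2, ?_⟩
  rintro ⟨l', _, _, _, (⟨h1x, _⟩ | ⟨h2x, _⟩)⟩
  · exact hx1 (F.anc_leaf hlx h1x).symm
  · exact hx2 (F.anc_leaf hlx h2x).symm

end RForest

/-- Setting of Lemma 2: `x₁,x₃` are sibling leaves in `F` and so are
`x₂,x₄` (while `(x₁,x₂)` and `(x₃,x₄)` are cherries of `T`).  Along every
root-leaf path of the search tree that first picks `({x₁},{x₂})` and then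
`({x₃},{x₄})` — i.e. whose cut `C` isolates `x₁`, isolates `x₂`, or creates
`{x₁,x₂}` by cutting `D_F(x₁,x₂)`, and likewise for `(x₃,x₄)` — at least two
of the four edges `e_F(x₁),…,e_F(x₄)` are cut. -/
theorem stmt_14 {V : Type} [Fintype V] (F : RForest V)
    (hbin : ∀ v : V, ({c | F.parent c = some v} : Set V).ncard ≤ 2)
    (x₁ x₂ x₃ x₄ : V)
    (hnodup : [x₁, x₂, x₃, x₄].Nodup)
    (hleaf : ∀ x ∈ ({x₁, x₂, x₃, x₄} : Set V), ∀ c, F.parent c ≠ some x)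
    (h13 : ∃ p, F.parent x₁ = some p ∧ F.parent x₃ = some p)
    (h24 : ∃ p, F.parent x₂ = some p ∧ F.parent x₄ = some p)
    (C : Set V)
    (hpick1 : x₁ ∈ C ∨ x₂ ∈ C ∨
      ((∃ l, F.Anc x₁ l ∧ F.Anc x₂ l) ∧ F.BranchSet x₁ x₂ ⊆ C))
    (hpick2 : x₃ ∈ C ∨ x₄ ∈ C ∨
      ((∃ l, F.Anc x₃ l ∧ F.Anc x₄ l) ∧ F.BranchSet x₃ x₄ ⊆ C)) :
    2 ≤ (({x₁, x₂, x₃, x₄} : Set V) ∩ C).ncard := by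
  simp only [List.nodup_cons, List.mem_cons, List.not_mem_nil, or_false,
    List.mem_singleton, not_or, List.nodup_nil, and_true] at hnodup
  obtain ⟨⟨h12, h13', h14⟩, ⟨h23, h24'⟩, h34, -⟩ := hnodup
  have hl1 := hleaf x₁ (by simp)
  have hl2 := hleaf x₂ (by simp)
  have hl3 := hleaf x₃ (by simp)
  have hl4 := hleaf x₄ (by simp)
  obtain ⟨p, hp1, hp3⟩ := h13
  obtain ⟨q, hq2, hq4⟩ := h24
  have key : ∀ a b : V, a ∈ ({x₁, x₂, x₃, x₄} : Set V) →
      b ∈ ({x₁, x₂, x₃, x₄} : Set V) → a ≠ b → a ∈ C → b ∈ C →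
      2 ≤ (({x₁, x₂, x₃, x₄} : Set V) ∩ C).ncard := by
    intro a b ha hb hab haC hbC
    have hsub : ({a, b} : Set V) ⊆ ({x₁, x₂, x₃, x₄} : Set V) ∩ C := by
      rintro z (rfl | rfl)
      · exact ⟨ha, haC⟩
      · exact ⟨hb, hbC⟩
    calc 2 = ({a, b} : Set V).ncard := (Set.ncard_pair hab).symm
      _ ≤ _ := Set.ncard_le_ncard hsub (Set.toFinite _)
  -- membership in branch sets
  rcases hpick1 with h1 | h2 | ⟨hcom12, hB12⟩
  · rcases hpick2 with g3 | g4 | ⟨hcom34, hB34⟩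
    · exact key x₁ x₃ (by simp) (by simp) h13' h1 g3
    · exact key x₁ x₄ (by simp) (by simp) h14 h1 g4
    · have m2 : x₂ ∈ F.BranchSet x₃ x₄ :=
        F.branchSet_symm (F.mem_branchSet hl4 hl3 hl2 (Ne.symm h34) h24'
          h23 hq4 hq2 (hcom34.imp fun l ⟨a, b⟩ => ⟨b, a⟩))
      exact key x₁ x₂ (by simp) (by simp) h12 h1 (hB34 m2)
  · rcases hpick2 with g3 | g4 | ⟨hcom34, hB34⟩
    · exact key x₂ x₃ (by simp) (by simp) h23 h2 g3
    · exact key x₂ x₄ (by simp) (by simp) h24' h2 g4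
    · have m1 : x₁ ∈ F.BranchSet x₃ x₄ :=
        F.mem_branchSet hl3 hl4 hl1 h34 h13' h14 hp3 hp1 hcom34
      exact key x₁ x₂ (by simp) (by simp) h12 (hB34 m1) h2
  · have m3 : x₃ ∈ F.BranchSet x₁ x₂ :=
      F.mem_branchSet hl1 hl2 hl3 h12 (Ne.symm h13') (Ne.symm h23) hp1 hp3 hcom12
    have m4 : x₄ ∈ F.BranchSet x₁ x₂ :=
      F.branchSet_symm (F.mem_branchSet hl2 hl1 hl4 (Ne.symm h12) (Ne.symm h24')
        (Ne.symm h14) hq2 hq4 (hcom12.imp fun l ⟨a, b⟩ => ⟨b, a⟩))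
    exact key x₃ x₄ (by simp) (by simp) h34 (hB12 m3) (hB12 m4)
end

section
/- If Y ⊆ L(T), X ⊆ Y, each component of T↑_Y is a dangling subtree of T, and P_Y is a root-leaf path of a Y-search tree extending to a root-leaf path P in a full search tree with C(P_Y) ⊆ C(P), then b(κ, P_Y) ≤ b(κ, P) for any key κ = (X,B,R); hence b_Y(κ) ≤ b_{L(T)}(κ). Abstractly: if C ⊆ C' are edge sets, then |C ∩ A| ≤ |C' ∩ A| for any edge set A, and the number of label-free components of F − ((C \ R) ∪ B) is at most that of F − ((C' \ R) ∪ B). -/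
/-- The number of label-free components of `G - D`: connected components of
`G.deleteEdges D` containing no labeled vertex. -/
noncomputable def nfree {V : Type} [Fintype V] (G : SimpleGraph V)
    (Lbl : Set V) (D : Set (Sym2 V)) : ℕ :=
  Nat.card {K : (G.deleteEdges D).ConnectedComponent //
    ∀ v : V, (G.deleteEdges D).connectedComponentMk v = K → v ∉ Lbl}

lemma nfree_mono {V : Type} [Fintype V] (G : SimpleGraph V) (Lbl : Set V)
    {D D' : Set (Sym2 V)} (h : D ⊆ D') : nfree G Lbl D ≤ nfree G Lbl D' := by
  classical
  have hle : G.deleteEdges D' ≤ G.deleteEdges D := SimpleGraph.deleteEdges_anti h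
  apply Nat.card_le_card_of_injective
    (f := fun K => (⟨(G.deleteEdges D').connectedComponentMk K.1.out, by
      intro v hv
      apply K.2 v
      have hr : (G.deleteEdges D').Reachable v K.1.out :=
        (SimpleGraph.ConnectedComponent.eq).mp hv
      have hr' : (G.deleteEdges D).Reachable v K.1.out := hr.mono hle
      have : (G.deleteEdges D).connectedComponentMk v
          = (G.deleteEdges D).connectedComponentMk K.1.out :=
        (SimpleGraph.ConnectedComponent.eq).mpr hr'
      rw [this]
      exact K.1.out_eq⟩ : {K : (G.deleteEdges D').ConnectedComponent //
        ∀ v : V, (G.deleteEdges D').connectedComponentMk v = K → v ∉ Lbl}))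
  intro K K' hKK'
  have hr : (G.deleteEdges D').Reachable K.1.out K'.1.out :=
    (SimpleGraph.ConnectedComponent.eq).mp (congrArg Subtype.val hKK')
  have hr' : (G.deleteEdges D).Reachable K.1.out K'.1.out := hr.mono hle
  have : (G.deleteEdges D).connectedComponentMk K.1.out
      = (G.deleteEdges D).connectedComponentMk K'.1.out :=
    (SimpleGraph.ConnectedComponent.eq).mpr hr'
  ext1
  rw [← K.1.out_eq, ← K'.1.out_eq]
  exact this

/-- Abstraction of Lemma 4 (monotonicity of the lower bound): in a finite
forest `F` with labeled leaves `Lbl`, with fixed edge sets `B` and `R`,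
define `b(C) = |C ∩ (B ∪ R)| + #(label-free components of
F − ((C \ R) ∪ B))`.  If `C ⊆ C'`, then `|C ∩ (B ∪ R)| ≤ |C' ∩ (B ∪ R)|`,
the number of label-free components does not decrease, and `b(C) ≤ b(C')`. -/
theorem stmt_16 {V : Type} [Fintype V] (F : SimpleGraph V)
    (hF : F.IsAcyclic) (Lbl : Set V)
    (B R C C' : Set (Sym2 V)) (hCC' : C ⊆ C') :
    (C ∩ (B ∪ R)).ncard ≤ (C' ∩ (B ∪ R)).ncard ∧
      nfree F Lbl ((C \ R) ∪ B) ≤ nfree F Lbl ((C' \ R) ∪ B) ∧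
      (C ∩ (B ∪ R)).ncard + nfree F Lbl ((C \ R) ∪ B)
        ≤ (C' ∩ (B ∪ R)).ncard + nfree F Lbl ((C' \ R) ∪ B) := by
  have h1 : (C ∩ (B ∪ R)).ncard ≤ (C' ∩ (B ∪ R)).ncard :=
    Set.ncard_le_ncard (Set.inter_subset_inter_left _ hCC') (Set.toFinite _)
  have h2 : nfree F Lbl ((C \ R) ∪ B) ≤ nfree F Lbl ((C' \ R) ∪ B) :=
    nfree_mono F Lbl (Set.union_subset_union_left B (Set.diff_subset_diff_left hCC'))
  exact ⟨h1, h2, Nat.add_le_add h1 h2⟩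
end
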